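/- Let σ2 > 0, B > 0, β(x) = σ2·(2^{x/B} − 1), β'(x) = (σ2·ln 2 / B)·2^{x/B}, and fix λ > 0, μ ≥ 0, α > 0, κ > 0, C > 0, R > 0, T > 0, g̃ > 0, p_c > 0. Define J(t, ℓ) = α·ℓ + λ·κ·C³·(R − ℓ)³/T² + (λ·t/g̃)·β(ℓ/t) + λ·p_c·t + μ·t on D = {(t, ℓ) : t > 0, 0 ≤ ℓ ≤ R} ∪ {(0, 0)}, with the β-term defined as 0 at (0, 0). Let r* > 0 be the unique solution of β(r) − r·β'(r) = −g̃·(μ/λ + p_c), let ℓ* = max(R − √((T²/(3·κ·C³))·(α/λ + β'(r*)/g̃)), 0) and t* = ℓ*/r*. Then (t*, ℓ*) ∈ D and J(t*, ℓ*) ≤ J(t, ℓ) for every (t, ℓ) ∈ D. -/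

import Mathlib

set_option maxHeartbeats 1000000


private lemma stmt5_aux (A D a R s : ℝ) (hA : 0 < A) (hs0 : 0 ≤ s) (hR : 0 < R)
    (key : 3 * A * s ^ 2 = a + D) (ℓst : ℝ) (hℓst : ℓst = max (R - s) 0) :
    ∀ ℓ : ℝ, 0 ≤ ℓ → ℓ ≤ R →
      a * ℓst + A * (R - ℓst) ^ 3 + D * ℓst ≤ a * ℓ + A * (R - ℓ) ^ 3 + D * ℓ := by
  intro ℓ hℓ0 hℓR
  rcases le_or_gt s R with hsR | hsR
  · have hls : ℓst = R - s := by rw [hℓst]; exact max_eq_left (by linarith)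
    rw [hls]
    have H1 : 0 ≤ A * ((R - ℓ - s) ^ 2 * ((R - ℓ) + 2 * s)) :=
      mul_nonneg hA.le (mul_nonneg (sq_nonneg _) (by linarith))
    have key2 : 3 * A * s ^ 2 * (R - ℓ - s) = (a + D) * (R - ℓ - s) := by rw [key]
    nlinarith [H1, key2]
  · have hls : ℓst = 0 := by rw [hℓst]; exact max_eq_right (by linarith)
    rw [hls]
    have inner : (R - ℓ) ^ 2 + (R - ℓ) * R + R ^ 2 ≤ 3 * s ^ 2 := by
      nlinarith [sq_nonneg (s - R), mul_nonneg hℓ0 (sub_nonneg.2 hℓR)]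
    have H2 : 0 ≤ ℓ * ((a + D) - A * ((R - ℓ) ^ 2 + (R - ℓ) * R + R ^ 2)) :=
      mul_nonneg hℓ0 (by nlinarith [mul_le_mul_of_nonneg_left inner hA.le, key])
    nlinarith [H2]

/-- Lemma 2, nontrivial case `λ > 0`: the semi-closed-form point `(t*, ℓ*)`,
with offloading rate `r*` solving `β(r) − r·β'(r) = −g̃·(μ/λ + p_c)`, globally
minimizes the Lagrangian subproblem objective `J` over
`D = {(t, ℓ) : t > 0, 0 ≤ ℓ ≤ R} ∪ {(0,0)}`. -/
theorem stmt5 (σ2 B : ℝ) (hσ2 : 0 < σ2) (hB : 0 < B)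
    (β β' : ℝ → ℝ)
    (hβ : ∀ x, β x = σ2 * ((2 : ℝ) ^ (x / B) - 1))
    (hβ' : ∀ x, β' x = σ2 * Real.log 2 / B * (2 : ℝ) ^ (x / B))
    (lam μ α κ C R T gtld pc : ℝ)
    (hlam : 0 < lam) (hμ : 0 ≤ μ) (hα : 0 < α) (hκ : 0 < κ) (hC : 0 < C)
    (hR : 0 < R) (hT : 0 < T) (hgtld : 0 < gtld) (hpc : 0 < pc)
    (J : ℝ → ℝ → ℝ)
    (hJ : ∀ t ℓ : ℝ, J t ℓ = α * ℓ + lam * κ * C ^ 3 * (R - ℓ) ^ 3 / T ^ 2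
      + (if t = 0 then 0 else lam * t / gtld * β (ℓ / t)) + lam * pc * t + μ * t)
    (rstar : ℝ) (hrstar : 0 < rstar)
    (hrsol : β rstar - rstar * β' rstar = -(gtld * (μ / lam + pc)))
    (ℓstar tstar : ℝ)
    (hℓstar : ℓstar =
      max (R - Real.sqrt (T ^ 2 / (3 * κ * C ^ 3) * (α / lam + β' rstar / gtld))) 0)
    (htstar : tstar = ℓstar / rstar) :
    ((0 < tstar ∧ 0 ≤ ℓstar ∧ ℓstar ≤ R) ∨ (tstar = 0 ∧ ℓstar = 0)) ∧
    ∀ t ℓ : ℝ, ((0 < t ∧ 0 ≤ ℓ ∧ ℓ ≤ R) ∨ (t = 0 ∧ ℓ = 0)) →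
      J tstar ℓstar ≤ J t ℓ := by
  have hlog2 : 0 < Real.log 2 := Real.log_pos (by norm_num)
  have hβ'pos : 0 < β' rstar := by
    rw [hβ']
    have := Real.rpow_pos_of_pos (show (0:ℝ) < 2 by norm_num) (rstar / B)
    positivity
  -- tangent line inequality for convex β
  have tangent : ∀ r : ℝ, β rstar + β' rstar * (r - rstar) ≤ β r := by
    intro r
    rw [hβ, hβ, hβ']
    have h2 : ∀ x : ℝ, (2:ℝ) ^ (x / B) = Real.exp (Real.log 2 * (x / B)) := fun x =>
      Real.rpow_def_of_pos (by norm_num) _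
    rw [h2, h2]
    set u := Real.log 2 * (r / B) with hu
    set v := Real.log 2 * (rstar / B) with hv
    have key : Real.exp v * (u - v + 1) ≤ Real.exp u := by
      have h1 := Real.add_one_le_exp (u - v)
      calc Real.exp v * (u - v + 1) ≤ Real.exp v * Real.exp (u - v) :=
            mul_le_mul_of_nonneg_left h1 (Real.exp_nonneg v)
        _ = Real.exp u := by rw [← Real.exp_add]; ring_nf
    have huv : u - v = Real.log 2 / B * (r - rstar) := by
      rw [hu, hv]; field_simp
    have hkey2 := mul_le_mul_of_nonneg_left key hσ2.le
    have h7 : σ2 * Real.log 2 / B * Real.exp v * (r - rstar) = σ2 * (Real.exp v * (u - v)) := by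
      rw [huv]; ring
    linarith [hkey2, h7.le, h7.ge]
  -- lower bound: J t ℓ ≥ reduced objective, for t > 0
  have lower : ∀ t ℓ : ℝ, 0 < t →
      lam * β' rstar / gtld * ℓ ≤ lam * t / gtld * β (ℓ / t) + lam * pc * t + μ * t := by
    intro t ℓ ht
    have h1 := tangent (ℓ / t)
    have hb : β rstar = rstar * β' rstar - gtld * (μ / lam + pc) := by linarith
    rw [hb] at h1
    have h2 : β' rstar * (ℓ / t) - gtld * (μ / lam + pc) ≤ β (ℓ / t) := by linarith
    have h3 : 0 < lam * t / gtld := by positivity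
    have h4 := mul_le_mul_of_nonneg_left h2 h3.le
    have h5 : t * (ℓ / t) = ℓ := mul_div_cancel₀ ℓ (ne_of_gt ht)
    have h6 : lam * t / gtld * (β' rstar * (ℓ / t) - gtld * (μ / lam + pc))
        = lam * β' rstar / gtld * ℓ - lam * pc * t - μ * t := by
      field_simp
      nlinarith [h5]
    linarith [h4, h6.symm.le]
  -- properties of s and ℓstar
  set s := Real.sqrt (T ^ 2 / (3 * κ * C ^ 3) * (α / lam + β' rstar / gtld)) with hs
  have hsnn : 0 ≤ s := Real.sqrt_nonneg _
  have harg : 0 ≤ T ^ 2 / (3 * κ * C ^ 3) * (α / lam + β' rstar / gtld) := by positivity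
  have hs2 : s ^ 2 = T ^ 2 / (3 * κ * C ^ 3) * (α / lam + β' rstar / gtld) :=
    Real.sq_sqrt harg
  have hApos : 0 < lam * κ * C ^ 3 / T ^ 2 := by positivity
  have key : 3 * (lam * κ * C ^ 3 / T ^ 2) * s ^ 2 = α + lam * β' rstar / gtld := by
    rw [hs2]; field_simp
  have hℓnn : 0 ≤ ℓstar := by rw [hℓstar]; exact le_max_right _ _
  have hℓR : ℓstar ≤ R := by
    rw [hℓstar]; exact max_le (by linarith) hR.le
  -- minimization of reduced objective
  have hmin : ∀ ℓ : ℝ, 0 ≤ ℓ → ℓ ≤ R →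
      α * ℓstar + lam * κ * C ^ 3 * (R - ℓstar) ^ 3 / T ^ 2 + lam * β' rstar / gtld * ℓstar
      ≤ α * ℓ + lam * κ * C ^ 3 * (R - ℓ) ^ 3 / T ^ 2 + lam * β' rstar / gtld * ℓ := by
    intro ℓ hℓ0 hℓle
    have haux := stmt5_aux (lam * κ * C ^ 3 / T ^ 2) (lam * β' rstar / gtld) α R s
      hApos hsnn hR key ℓstar hℓstar ℓ hℓ0 hℓle
    have e1 : ∀ x : ℝ, α * x + lam * κ * C ^ 3 / T ^ 2 * (R - x) ^ 3
        + lam * β' rstar / gtld * x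
        = α * x + lam * κ * C ^ 3 * (R - x) ^ 3 / T ^ 2 + lam * β' rstar / gtld * x :=
      fun x => by ring
    rw [e1, e1] at haux
    exact haux
  -- value at the candidate point
  have hstar_eq : J tstar ℓstar
      = α * ℓstar + lam * κ * C ^ 3 * (R - ℓstar) ^ 3 / T ^ 2
        + lam * β' rstar / gtld * ℓstar := by
    rcases eq_or_lt_of_le hℓnn with h0 | hpos
    · have ht0 : tstar = 0 := by rw [htstar, ← h0]; simp
      rw [hJ, ht0, if_pos rfl, ← h0]; ring
    · have ht0 : 0 < tstar := by rw [htstar]; positivity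
      have htne : tstar ≠ 0 := ne_of_gt ht0
      have hrat : ℓstar / tstar = rstar := by
        rw [htstar]; field_simp
      have hb : β rstar = rstar * β' rstar - gtld * (μ / lam + pc) := by linarith
      have hv2 : lam * tstar / gtld * β rstar + lam * pc * tstar + μ * tstar
          = lam * β' rstar / gtld * ℓstar := by
        rw [hb, htstar]; field_simp; ring
      rw [hJ, if_neg htne, hrat]
      linarith [hv2]
  constructor
  · rcases eq_or_lt_of_le hℓnn with h0 | hpos
    · right
      refine ⟨?_, h0.symm⟩
      rw [htstar, ← h0]; simp
    · left
      refine ⟨?_, hℓnn, hℓR⟩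
      rw [htstar]; positivity
  · intro t ℓ hmem
    rcases hmem with ⟨ht, hℓ0, hℓle⟩ | ⟨ht0, hℓ0⟩
    · have h1 := lower t ℓ ht
      have h2 := hmin ℓ hℓ0 hℓle
      rw [hJ t ℓ, if_neg (ne_of_gt ht)]
      rw [hstar_eq]
      linarith
    · have h2 := hmin 0 le_rfl hR.le
      rw [hJ t ℓ, ht0, hℓ0, if_pos rfl, hstar_eq]
      simpa using h2
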